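/- For integers d₁, d₂ ≥ 1, let N(d₁, d₂) be the number of intersecting pairs (Q, R) ∈ 𝒬_{d₁} × ℛ_{d₂} with both Q and R primitive, and for integers a, b ≥ 0 let T(a, b) be the total number of intersecting pairs in 𝒬_a × ℛ_b. Then the Möbius-inversion identity N(d₁, d₂) + q·T(d₁−1, d₂) + q·T(d₁, d₂−1) = T(d₁, d₂) + q²·T(d₁−1, d₂−1) holds for all d₁, d₂ ≥ 1. -/

import Mathlib

open Polynomial

/-- `Qset F d`: triples `(q₀, q₁, q₂)` of polynomials over `F` with `q₀` monic of degree `d`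
and `q₁, q₂` of degree `< d`. -/
def Qset (F : Type*) [Field F] (d : ℕ) : Set (F[X] × F[X] × F[X]) :=
  {t | t.1.Monic ∧ t.1.natDegree = d ∧
    t.2.1.degree < (d : WithBot ℕ) ∧ t.2.2.degree < (d : WithBot ℕ)}

/-- `Rset F d`: triples `(r₀, r₁, r₂)` of polynomials over `F` with `r₂` monic of degree `d`
and `r₀, r₁` of degree `< d`. -/
def Rset (F : Type*) [Field F] (d : ℕ) : Set (F[X] × F[X] × F[X]) :=
  {t | t.2.2.Monic ∧ t.2.2.natDegree = d ∧
    t.1.degree < (d : WithBot ℕ) ∧ t.2.1.degree < (d : WithBot ℕ)}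

/-- A triple is primitive if every common divisor of its three entries is a unit. -/
def Primitive {F : Type*} [Field F] (t : F[X] × F[X] × F[X]) : Prop :=
  ∀ g : F[X], g ∣ t.1 → g ∣ t.2.1 → g ∣ t.2.2 → IsUnit g

/-- A pair `(Q, R)` is intersecting if `q₀r₀ + q₁r₁ + q₂r₂ = 0`. -/
def Intersecting {F : Type*} [Field F] (Q R : F[X] × F[X] × F[X]) : Prop :=
  Q.1 * R.1 + Q.2.1 * R.2.1 + Q.2.2 * R.2.2 = 0

namespace Aux
variable {F : Type*} [Field F] [DecidableEq F]

abbrev Trip (F : Type*) [Field F] := F[X] × F[X] × F[X]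

noncomputable def smulT (g : F[X]) (t : Trip F) : Trip F := (g * t.1, g * t.2.1, g * t.2.2)
noncomputable def divT (t : Trip F) (g : F[X]) : Trip F := (t.1 / g, t.2.1 / g, t.2.2 / g)
noncomputable def gcd3 (t : Trip F) : F[X] := gcd t.1 (gcd t.2.1 t.2.2)

theorem gcd3_dvd1 (t : Trip F) : gcd3 t ∣ t.1 := gcd_dvd_left _ _
theorem gcd3_dvd2 (t : Trip F) : gcd3 t ∣ t.2.1 := (gcd_dvd_right _ _).trans (gcd_dvd_left _ _)
theorem gcd3_dvd3 (t : Trip F) : gcd3 t ∣ t.2.2 := (gcd_dvd_right _ _).trans (gcd_dvd_right _ _)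

theorem primitive_iff (t : Trip F) : Primitive t ↔ IsUnit (gcd3 t) := by
  constructor
  · exact fun h => h _ (gcd3_dvd1 t) (gcd3_dvd2 t) (gcd3_dvd3 t)
  · intro h g h1 h2 h3
    exact isUnit_of_dvd_unit (dvd_gcd h1 (dvd_gcd h2 h3)) h

theorem gcd3_smul (g : F[X]) (hg : g.Monic) (t : Trip F) :
    gcd3 (smulT g t) = g * gcd3 t := by
  unfold gcd3 smulT
  simp only
  rw [gcd_mul_left, hg.normalize_eq_self, gcd_mul_left, hg.normalize_eq_self]

theorem smulT_divT (t : Trip F) (g : F[X]) (hg : g ≠ 0)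
    (h1 : g ∣ t.1) (h2 : g ∣ t.2.1) (h3 : g ∣ t.2.2) : smulT g (divT t g) = t := by
  unfold smulT divT
  simp only [EuclideanDomain.mul_div_cancel' hg h1, EuclideanDomain.mul_div_cancel' hg h2,
    EuclideanDomain.mul_div_cancel' hg h3]

theorem divT_smulT (g : F[X]) (t : Trip F) (hg : g ≠ 0) : divT (smulT g t) g = t := by
  unfold smulT divT
  simp only
  rw [← EuclideanDomain.eq_div_of_mul_eq_right hg rfl,
    ← EuclideanDomain.eq_div_of_mul_eq_right hg rfl,
    ← EuclideanDomain.eq_div_of_mul_eq_right hg rfl]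

theorem gcd3_ne_zero (t : Trip F) (h : t.1 ≠ 0) : gcd3 t ≠ 0 := by
  intro h0
  exact h ((gcd_eq_zero_iff _ _).mp h0).1

/-- the normalized gcd of a triple with nonzero first entry is monic -/
theorem monic_ngcd3 (t : Trip F) (h : t.1 ≠ 0) : (normalize (gcd3 t)).Monic :=
  monic_normalize (gcd3_ne_zero t h)

theorem ngcd3_dvd1 (t : Trip F) : normalize (gcd3 t) ∣ t.1 := normalize_dvd_iff.mpr (gcd3_dvd1 t)
theorem ngcd3_dvd2 (t : Trip F) : normalize (gcd3 t) ∣ t.2.1 := normalize_dvd_iff.mpr (gcd3_dvd2 t)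
theorem ngcd3_dvd3 (t : Trip F) : normalize (gcd3 t) ∣ t.2.2 := normalize_dvd_iff.mpr (gcd3_dvd3 t)

theorem smulT_ngcd3_divT (t : Trip F) (h : t.1 ≠ 0) :
    smulT (normalize (gcd3 t)) (divT t (normalize (gcd3 t))) = t :=
  smulT_divT t _ ((monic_ngcd3 t h).ne_zero) (ngcd3_dvd1 t) (ngcd3_dvd2 t) (ngcd3_dvd3 t)

theorem primitive_divT_ngcd3 (t : Trip F) (h : t.1 ≠ 0) :
    IsUnit (gcd3 (divT t (normalize (gcd3 t)))) := by
  set g := normalize (gcd3 t) with hgdef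
  have hgm : g.Monic := monic_ngcd3 t h
  have key : gcd3 t = g * gcd3 (divT t g) := by
    conv_lhs => rw [← smulT_ngcd3_divT t h]
    rw [gcd3_smul g hgm]
  have : g = g * normalize (gcd3 (divT t g)) := by
    conv_lhs => rw [hgdef, key, normalize_mul, hgm.normalize_eq_self]
  rw [eq_comm, mul_right_eq_self₀] at this
  rcases this with h1 | h1
  · exact normalize_eq_one.mp h1
  · exact absurd h1 hgm.ne_zero

/-- gcd3 of a monic-scaled primitive triple normalizes back to the scalar -/
theorem ngcd3_smul_of_primitive (g : F[X]) (hg : g.Monic) (t : Trip F) (ht : IsUnit (gcd3 t)) :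
    normalize (gcd3 (smulT g t)) = g := by
  rw [gcd3_smul g hg, normalize_mul, hg.normalize_eq_self, normalize_eq_one.mpr ht, mul_one]

theorem intersecting_smul_iff (g : F[X]) (hg : g ≠ 0) (t R : Trip F) :
    Intersecting (smulT g t) R ↔ Intersecting t R := by
  unfold Intersecting smulT
  simp only
  rw [show g * t.1 * R.1 + g * t.2.1 * R.2.1 + g * t.2.2 * R.2.2
      = g * (t.1 * R.1 + t.2.1 * R.2.1 + t.2.2 * R.2.2) by ring, mul_eq_zero]
  simp [hg]


theorem aux_monic_lin (g' : F[X]) (hg' : g'.Monic) (c : F) :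
    (X * g' + C c).Monic ∧ (X * g' + C c).natDegree = g'.natDegree + 1 := by
  have hXg : (X * g').Monic := monic_X.mul hg'
  have hXgdeg : (X * g').natDegree = g'.natDegree + 1 := by
    rw [natDegree_mul X_ne_zero hg'.ne_zero, natDegree_X]; ring
  have hlt : (C c).degree < (X * g').degree := by
    rw [degree_eq_natDegree hXg.ne_zero, hXgdeg]
    exact lt_of_le_of_lt degree_C_le (by exact_mod_cast Nat.succ_pos g'.natDegree)
  refine ⟨hXg.add_of_left hlt, ?_⟩
  rw [natDegree_eq_of_degree_eq (degree_add_eq_left_of_degree_lt hlt), hXgdeg]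

/-- decomposition of a monic polynomial of positive degree as X * g' + C c with g' monic -/
theorem aux_decomp (g : F[X]) (hg : g.Monic) (hd : 1 ≤ g.natDegree) :
    g = X * (g /ₘ X) + C (g.coeff 0) ∧ (g /ₘ X).Monic ∧ (g /ₘ X).natDegree + 1 = g.natDegree := by
  have hid : g = X * (g /ₘ X) + C (g.coeff 0) := by
    conv_lhs => rw [← modByMonic_add_div g X]
    rw [modByMonic_X, coeff_zero_eq_eval_zero]; ring
  have hne : g /ₘ X ≠ 0 := by
    intro h0
    rw [h0, mul_zero, zero_add] at hid
    have := natDegree_C (g.coeff 0) ▸ hid ▸ hd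
    omega
  have hXg : (X * (g /ₘ X)).natDegree = (g /ₘ X).natDegree + 1 := by
    rw [natDegree_mul X_ne_zero hne, natDegree_X]; ring
  have hlt : (C (g.coeff 0)).degree < (X * (g /ₘ X)).degree := by
    have h1 : (0 : WithBot ℕ) < (X * (g /ₘ X)).degree := by
      rw [degree_eq_natDegree (mul_ne_zero X_ne_zero hne), hXg]
      exact_mod_cast Nat.succ_pos _
    exact lt_of_le_of_lt degree_C_le h1
  have hmon : (g /ₘ X).Monic := by
    have hlc : g.leadingCoeff = (X * (g /ₘ X)).leadingCoeff := by
      conv_lhs => rw [hid, add_comm]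
      exact leadingCoeff_add_of_degree_lt hlt
    have : (X * (g /ₘ X)).leadingCoeff = (g /ₘ X).leadingCoeff := by
      rw [leadingCoeff_mul, leadingCoeff_X, one_mul]
    unfold Monic
    rw [← this, ← hlc]; exact hg
  refine ⟨hid, hmon, ?_⟩
  have : g.natDegree = (X * (g /ₘ X)).natDegree := by
    conv_lhs => rw [hid]
    rw [add_comm]
    exact natDegree_eq_of_degree_eq (degree_add_eq_right_of_degree_lt hlt)
  omega

/-- monic non-unit iff natDegree ≥ 1 -/
theorem aux_monic_not_unit (g : F[X]) (hg : g.Monic) (hd : 1 ≤ g.natDegree) : ¬ IsUnit g := by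
  intro h
  rw [hg.isUnit_iff] at h
  rw [h, natDegree_one] at hd
  omega

/-- quotient of monic by monic divisor is monic with complementary degree -/
theorem aux_div_monic (a g : F[X]) (ha : a.Monic) (hg : g.Monic) (hdvd : g ∣ a) :
    (a / g).Monic ∧ g.natDegree + (a / g).natDegree = a.natDegree := by
  have hrec : g * (a / g) = a := EuclideanDomain.mul_div_cancel' hg.ne_zero hdvd
  have hmon : (a / g).Monic := hg.of_mul_monic_left (hrec.symm ▸ ha)
  refine ⟨hmon, ?_⟩
  conv_rhs => rw [← hrec]
  rw [natDegree_mul hg.ne_zero hmon.ne_zero]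


def Sg (F : Type*) [Field F] (a : ℕ) (W : Set (Trip F)) : Set (Trip F × Trip F) :=
  {p | p.1 ∈ Qset F a ∧ p.2 ∈ W ∧ Intersecting p.1 p.2}

noncomputable def phi (x : F × (Trip F × Trip F)) : Trip F × Trip F :=
  (smulT (X * normalize (gcd3 x.2.1) + C x.1) (divT x.2.1 (normalize (gcd3 x.2.1))), x.2.2)

noncomputable def psi (p : Trip F × Trip F) : F × (Trip F × Trip F) :=
  ((normalize (gcd3 p.1)).coeff 0,
    (smulT ((normalize (gcd3 p.1)) /ₘ X) (divT p.1 (normalize (gcd3 p.1))), p.2))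

theorem aux_degbound (g' g x : F[X]) (hg' : g'.Monic) (hg : g.Monic)
    (hrel : g.natDegree = g'.natDegree + 1) (n : ℕ)
    (hd : (g' * x).degree < (n : WithBot ℕ)) : (g * x).degree < ((n + 1 : ℕ) : WithBot ℕ) := by
  rcases eq_or_ne x 0 with rfl | hx
  · rw [mul_zero, degree_zero]
    exact WithBot.bot_lt_coe _
  · have h1 : (g' * x).natDegree < n :=
      (natDegree_lt_iff_degree_lt (mul_ne_zero hg'.ne_zero hx)).mpr hd
    rw [natDegree_mul hg'.ne_zero hx] at h1
    have h2 : (g * x).natDegree < n + 1 := by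
      rw [natDegree_mul hg.ne_zero hx, hrel]; omega
    exact (natDegree_lt_iff_degree_lt (mul_ne_zero hg.ne_zero hx)).mp h2

theorem aux_degbound_down (g' g x : F[X]) (hg' : g'.Monic) (hg : g.Monic)
    (hrel : g.natDegree = g'.natDegree + 1) (n : ℕ)
    (hd : (g * x).degree < ((n + 1 : ℕ) : WithBot ℕ)) : (g' * x).degree < (n : WithBot ℕ) := by
  rcases eq_or_ne x 0 with rfl | hx
  · rw [mul_zero, degree_zero]
    exact WithBot.bot_lt_coe _
  · have h1 : (g * x).natDegree < n + 1 :=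
      (natDegree_lt_iff_degree_lt (mul_ne_zero hg.ne_zero hx)).mpr hd
    rw [natDegree_mul hg.ne_zero hx, hrel] at h1
    have h2 : (g' * x).natDegree < n := by
      rw [natDegree_mul hg'.ne_zero hx]; omega
    exact (natDegree_lt_iff_degree_lt (mul_ne_zero hg'.ne_zero hx)).mp h2

theorem mapsTo_phi (a : ℕ) (ha : 1 ≤ a) (W : Set (Trip F)) :
    Set.MapsTo phi (Set.univ ×ˢ Sg F (a - 1) W) (Sg F a W \ {p | Primitive p.1}) := by
  rintro ⟨c, Q, R⟩ ⟨-, ⟨hQm, hQd, hQ2, hQ3⟩, hR, hInt⟩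
  have hQ1ne : Q.1 ≠ 0 := hQm.ne_zero
  set g' := normalize (gcd3 Q) with hg'def
  have hg'm : g'.Monic := monic_ngcd3 Q hQ1ne
  set Q'' := divT Q g' with hQ''def
  have hrec : smulT g' Q'' = Q := smulT_ngcd3_divT Q hQ1ne
  have hprim : IsUnit (gcd3 Q'') := primitive_divT_ngcd3 Q hQ1ne
  have hdiv1 : g' * Q''.1 = Q.1 := congrArg Prod.fst hrec
  have hdiv2 : g' * Q''.2.1 = Q.2.1 := congrArg (fun t => t.2.1) hrec
  have hdiv3 : g' * Q''.2.2 = Q.2.2 := congrArg (fun t => t.2.2) hrec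
  have hQ''m : Q''.1.Monic := hg'm.of_mul_monic_left (hdiv1 ▸ hQm)
  have hdeg1 : g'.natDegree + Q''.1.natDegree = a - 1 := by
    rw [← hQd, ← hdiv1, natDegree_mul hg'm.ne_zero hQ''m.ne_zero]
  obtain ⟨hgm, hgd⟩ := aux_monic_lin g' hg'm c
  set g := X * g' + C c with hgdef
  have hacast : ((a : ℕ) : WithBot ℕ) = (((a - 1) + 1 : ℕ) : WithBot ℕ) := by
    congr 1; omega
  have hphi : phi (c, (Q, R)) = (smulT g Q'', R) := rfl
  rw [hphi]
  constructor
  · refine ⟨⟨hgm.mul hQ''m, ?_, ?_, ?_⟩, hR, ?_⟩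
    · show (g * Q''.1).natDegree = a
      rw [natDegree_mul hgm.ne_zero hQ''m.ne_zero, hgd]; omega
    · show (g * Q''.2.1).degree < _
      rw [hacast]
      exact aux_degbound g' g Q''.2.1 hg'm hgm hgd (a - 1) (hdiv2 ▸ hQ2)
    · show (g * Q''.2.2).degree < _
      rw [hacast]
      exact aux_degbound g' g Q''.2.2 hg'm hgm hgd (a - 1) (hdiv3 ▸ hQ3)
    · exact (intersecting_smul_iff g hgm.ne_zero Q'' R).mpr
        ((intersecting_smul_iff g' hg'm.ne_zero Q'' R).mp (hrec ▸ hInt))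
  · intro hp
    exact aux_monic_not_unit g hgm (by omega)
      (hp g ⟨Q''.1, rfl⟩ ⟨Q''.2.1, rfl⟩ ⟨Q''.2.2, rfl⟩)

theorem mapsTo_psi (a : ℕ) (W : Set (Trip F)) :
    Set.MapsTo psi (Sg F a W \ {p | Primitive p.1}) (Set.univ ×ˢ Sg F (a - 1) W) := by
  rintro ⟨Q, R⟩ ⟨⟨⟨hQm, hQd, hQ2, hQ3⟩, hR, hInt⟩, hnp⟩
  have hQ1ne : Q.1 ≠ 0 := hQm.ne_zero
  set g := normalize (gcd3 Q) with hgdef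
  have hgm : g.Monic := monic_ngcd3 Q hQ1ne
  have hgu : ¬ IsUnit g := by
    intro h
    exact hnp ((primitive_iff Q).mpr ((associated_normalize (gcd3 Q)).symm.isUnit h))
  have hgd1 : 1 ≤ g.natDegree := by
    by_contra h
    exact hgu (hgm.isUnit_iff.mpr (hgm.natDegree_eq_zero.mp (by omega)))
  obtain ⟨hid, hg'm, hg'd⟩ := aux_decomp g hgm hgd1
  set g' := g /ₘ X with hg'def
  set Q'' := divT Q g with hQ''def
  have hrec : smulT g Q'' = Q := smulT_ngcd3_divT Q hQ1ne
  have hprim : IsUnit (gcd3 Q'') := primitive_divT_ngcd3 Q hQ1ne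
  have hdiv1 : g * Q''.1 = Q.1 := congrArg Prod.fst hrec
  have hdiv2 : g * Q''.2.1 = Q.2.1 := congrArg (fun t => t.2.1) hrec
  have hdiv3 : g * Q''.2.2 = Q.2.2 := congrArg (fun t => t.2.2) hrec
  have hQ''m : Q''.1.Monic := hgm.of_mul_monic_left (hdiv1 ▸ hQm)
  have hdeg1 : g.natDegree + Q''.1.natDegree = a := by
    rw [← hQd, ← hdiv1, natDegree_mul hgm.ne_zero hQ''m.ne_zero]
  have ha1 : 1 ≤ a := by omega
  have hacast : ((a : ℕ) : WithBot ℕ) = (((a - 1) + 1 : ℕ) : WithBot ℕ) := by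
    congr 1; omega
  have hpsi : psi (Q, R) = (g.coeff 0, (smulT g' Q'', R)) := rfl
  rw [hpsi]
  refine ⟨Set.mem_univ _, ⟨hg'm.mul hQ''m, ?_, ?_, ?_⟩, hR, ?_⟩
  · show (g' * Q''.1).natDegree = a - 1
    rw [natDegree_mul hg'm.ne_zero hQ''m.ne_zero]; omega
  · show (g' * Q''.2.1).degree < _
    exact aux_degbound_down g' g Q''.2.1 hg'm hgm (by omega) (a - 1)
      (by rw [← hacast]; exact hdiv2 ▸ hQ2)
  · show (g' * Q''.2.2).degree < _
    exact aux_degbound_down g' g Q''.2.2 hg'm hgm (by omega) (a - 1)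
      (by rw [← hacast]; exact hdiv3 ▸ hQ3)
  · exact (intersecting_smul_iff g' hg'm.ne_zero Q'' R).mpr
      ((intersecting_smul_iff g hgm.ne_zero Q'' R).mp (hrec ▸ hInt))


theorem psi_phi (a : ℕ) (W : Set (Trip F)) :
    ∀ x ∈ (Set.univ ×ˢ Sg F (a - 1) W : Set (F × (Trip F × Trip F))), psi (phi x) = x := by
  rintro ⟨c, Q, R⟩ ⟨-, ⟨hQm, hQd, hQ2, hQ3⟩, hR, hInt⟩
  have hQ1ne : Q.1 ≠ 0 := hQm.ne_zero
  set g' := normalize (gcd3 Q) with hg'def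
  have hg'm : g'.Monic := monic_ngcd3 Q hQ1ne
  set Q'' := divT Q g' with hQ''def
  have hrec : smulT g' Q'' = Q := smulT_ngcd3_divT Q hQ1ne
  have hprim : IsUnit (gcd3 Q'') := primitive_divT_ngcd3 Q hQ1ne
  obtain ⟨hgm, hgd⟩ := aux_monic_lin g' hg'm c
  set g := X * g' + C c with hgdef
  have hphi : phi (c, (Q, R)) = (smulT g Q'', R) := rfl
  have hngcd : normalize (gcd3 (smulT g Q'')) = g := ngcd3_smul_of_primitive g hgm Q'' hprim
  have hcoeff : g.coeff 0 = c := by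
    rw [hgdef, coeff_add, coeff_C_zero, mul_coeff_zero, coeff_X_zero, zero_mul, zero_add]
  have hdm : g /ₘ X = g' := by
    refine (div_modByMonic_unique g' (C c) monic_X ⟨by ring, ?_⟩).1
    exact lt_of_le_of_lt degree_C_le (by rw [degree_X]; decide)
  have hdivT : divT (smulT g Q'') g = Q'' := divT_smulT g Q'' hgm.ne_zero
  rw [hphi]
  show ((normalize (gcd3 (smulT g Q''))).coeff 0,
    (smulT ((normalize (gcd3 (smulT g Q''))) /ₘ X) (divT (smulT g Q'') (normalize (gcd3 (smulT g Q'')))), R))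
    = (c, (Q, R))
  rw [hngcd, hcoeff, hdm, hdivT, hrec]

theorem phi_psi (a : ℕ) (W : Set (Trip F)) :
    ∀ p ∈ (Sg F a W \ {p | Primitive p.1}), phi (psi p) = p := by
  rintro ⟨Q, R⟩ ⟨⟨⟨hQm, hQd, hQ2, hQ3⟩, hR, hInt⟩, hnp⟩
  have hQ1ne : Q.1 ≠ 0 := hQm.ne_zero
  set g := normalize (gcd3 Q) with hgdef
  have hgm : g.Monic := monic_ngcd3 Q hQ1ne
  have hgu : ¬ IsUnit g := by
    intro h
    exact hnp ((primitive_iff Q).mpr ((associated_normalize (gcd3 Q)).symm.isUnit h))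
  have hgd1 : 1 ≤ g.natDegree := by
    by_contra h
    exact hgu (hgm.isUnit_iff.mpr (hgm.natDegree_eq_zero.mp (by omega)))
  obtain ⟨hid, hg'm, hg'd⟩ := aux_decomp g hgm hgd1
  set g' := g /ₘ X with hg'def
  set Q'' := divT Q g with hQ''def
  have hrec : smulT g Q'' = Q := smulT_ngcd3_divT Q hQ1ne
  have hprim : IsUnit (gcd3 Q'') := primitive_divT_ngcd3 Q hQ1ne
  have hpsi : psi (Q, R) = (g.coeff 0, (smulT g' Q'', R)) := rfl
  have hngcd : normalize (gcd3 (smulT g' Q'')) = g' := ngcd3_smul_of_primitive g' hg'm Q'' hprim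
  have hdivT : divT (smulT g' Q'') g' = Q'' := divT_smulT g' Q'' hg'm.ne_zero
  rw [hpsi]
  show (smulT (X * normalize (gcd3 (smulT g' Q'')) + C (g.coeff 0))
      (divT (smulT g' Q'') (normalize (gcd3 (smulT g' Q'')))), R) = (Q, R)
  rw [hngcd, hdivT, ← hid, hrec]


theorem degset_finite [Fintype F] (n : ℕ) :
    ({p : F[X] | p.degree < ((n : ℕ) : WithBot ℕ)}).Finite := by
  have : Finite (degreeLT F n) := Finite.of_equiv _ (degreeLTEquiv F n).toEquiv.symm
  have hset : ({p : F[X] | p.degree < ((n : ℕ) : WithBot ℕ)}) = ↑(degreeLT F n) := by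
    ext p; simp [Polynomial.mem_degreeLT]
  rw [hset]
  exact (degreeLT F n : Set F[X]).toFinite

theorem qset_finite [Fintype F] (a : ℕ) : (Qset F a).Finite := by
  have hD := degset_finite (F := F) (a + 1)
  apply (hD.prod (hD.prod hD)).subset
  rintro ⟨p1, p2, p3⟩ ⟨hm, hd, h2, h3⟩
  have hle : ((a : ℕ) : WithBot ℕ) < (((a + 1 : ℕ)) : WithBot ℕ) := by
    exact_mod_cast Nat.lt_succ_self a
  refine ⟨?_, ?_, ?_⟩
  · show p1.degree < _
    rw [degree_eq_natDegree hm.ne_zero, hd]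
    exact hle
  · exact h2.trans hle
  · exact h3.trans hle

theorem rset_finite [Fintype F] (b : ℕ) : (Rset F b).Finite := by
  have hD := degset_finite (F := F) (b + 1)
  apply (hD.prod (hD.prod hD)).subset
  rintro ⟨p1, p2, p3⟩ ⟨hm, hd, h2, h3⟩
  have hle : ((b : ℕ) : WithBot ℕ) < (((b + 1 : ℕ)) : WithBot ℕ) := by
    exact_mod_cast Nat.lt_succ_self b
  refine ⟨h2.trans hle, h3.trans hle, ?_⟩
  · show p3.degree < _
    rw [degree_eq_natDegree hm.ne_zero, hd]
    exact hle

theorem sg_finite [Fintype F] (a : ℕ) (W : Set (Trip F)) (hW : W.Finite) :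
    (Sg F a W).Finite :=
  ((qset_finite a).prod hW).subset (fun p hp => ⟨hp.1, hp.2.1⟩)

theorem lemmaL [Fintype F] (a : ℕ) (ha : 1 ≤ a) (W : Set (Trip F)) (hW : W.Finite) :
    (Sg F a W).ncard
      = (Sg F a W ∩ {p | Primitive p.1}).ncard + Fintype.card F * (Sg F (a - 1) W).ncard := by
  have hsplit := Set.ncard_inter_add_ncard_diff_eq_ncard (Sg F a W) {p | Primitive p.1}
    (sg_finite a W hW)
  have hbij : Set.BijOn phi (Set.univ ×ˢ Sg F (a - 1) W) (Sg F a W \ {p | Primitive p.1}) :=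
    Set.InvOn.bijOn ⟨psi_phi a W, phi_psi a W⟩ (mapsTo_phi a ha W) (mapsTo_psi a W)
  have himg := hbij.image_eq
  have hinj := Set.ncard_image_of_injOn hbij.injOn
  have hprod : (Set.univ ×ˢ Sg F (a - 1) W : Set (F × (Trip F × Trip F))).ncard
      = Fintype.card F * (Sg F (a - 1) W).ncard := by
    rw [← Nat.card_coe_set_eq, Nat.card_congr (Equiv.Set.prod _ _), Nat.card_prod,
      Nat.card_coe_set_eq, Nat.card_coe_set_eq, Set.ncard_univ, Nat.card_eq_fintype_card]
  rw [himg] at hinj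
  omega

def swapT (t : Trip F) : Trip F := (t.2.2, t.2.1, t.1)

def sw (p : Trip F × Trip F) : Trip F × Trip F := (swapT p.2, swapT p.1)

theorem sw_invol : Function.Involutive (sw (F := F)) := fun _ => rfl

theorem mem_sw_image (s : Set (Trip F × Trip F)) (p : Trip F × Trip F) :
    p ∈ sw '' s ↔ sw p ∈ s := by
  constructor
  · rintro ⟨x, hx, rfl⟩
    rwa [sw_invol x]
  · intro h
    exact ⟨sw p, h, sw_invol p⟩

theorem swapT_mem_Qset_iff (t : Trip F) (b : ℕ) : swapT t ∈ Qset F b ↔ t ∈ Rset F b := by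
  unfold swapT Qset Rset
  simp only [Set.mem_setOf_eq]
  tauto

theorem swapT_mem_Rset_iff (t : Trip F) (b : ℕ) : swapT t ∈ Rset F b ↔ t ∈ Qset F b := by
  unfold swapT Qset Rset
  simp only [Set.mem_setOf_eq]
  tauto

theorem primitive_swapT (t : Trip F) : Primitive (swapT t) ↔ Primitive t := by
  unfold Primitive swapT
  simp only
  exact ⟨fun h g h1 h2 h3 => h g h3 h2 h1, fun h g h1 h2 h3 => h g h3 h2 h1⟩

theorem intersecting_swapT (p q : Trip F) :
    Intersecting (swapT q) (swapT p) ↔ Intersecting p q := by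
  unfold Intersecting swapT
  simp only
  constructor <;> intro h <;> linear_combination h

theorem ncard_sw_image (s : Set (Trip F × Trip F)) : (sw '' s).ncard = s.ncard :=
  Set.ncard_image_of_injective s sw_invol.injective

theorem claim1 (a b : ℕ) :
    sw '' (Sg F a (Rset F b) ∩ {p | Primitive p.1})
      = Sg F b (Rset F a ∩ {t | Primitive t}) := by
  ext p
  rw [mem_sw_image]
  show (swapT p.2 ∈ Qset F a ∧ swapT p.1 ∈ Rset F b ∧ Intersecting (swapT p.2) (swapT p.1))
      ∧ Primitive (swapT p.2)
    ↔ p.1 ∈ Qset F b ∧ (p.2 ∈ Rset F a ∧ Primitive p.2) ∧ Intersecting p.1 p.2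
  rw [swapT_mem_Qset_iff, swapT_mem_Rset_iff, intersecting_swapT, primitive_swapT]
  tauto

theorem claim2 (a b : ℕ) :
    sw '' {p : Trip F × Trip F | p.1 ∈ Qset F a ∧ p.2 ∈ Rset F b ∧ Primitive p.1 ∧
        Primitive p.2 ∧ Intersecting p.1 p.2}
      = Sg F b (Rset F a ∩ {t | Primitive t}) ∩ {p | Primitive p.1} := by
  ext p
  rw [mem_sw_image]
  show swapT p.2 ∈ Qset F a ∧ swapT p.1 ∈ Rset F b ∧ Primitive (swapT p.2) ∧
      Primitive (swapT p.1) ∧ Intersecting (swapT p.2) (swapT p.1)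
    ↔ (p.1 ∈ Qset F b ∧ (p.2 ∈ Rset F a ∧ Primitive p.2) ∧ Intersecting p.1 p.2) ∧ Primitive p.1
  rw [swapT_mem_Qset_iff, swapT_mem_Rset_iff, intersecting_swapT, primitive_swapT, primitive_swapT]
  tauto

end Aux

theorem stmt_8 (F : Type*) [Field F] [Fintype F] (q : ℕ) (hq : q = Fintype.card F)
    (d₁ d₂ : ℕ) (h1 : 1 ≤ d₁) (h2 : 1 ≤ d₂)
    (N : ℕ)
    (hN : N = Set.ncard {p : (F[X] × F[X] × F[X]) × (F[X] × F[X] × F[X]) |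
        p.1 ∈ Qset F d₁ ∧ p.2 ∈ Rset F d₂ ∧ Primitive p.1 ∧ Primitive p.2 ∧
        Intersecting p.1 p.2})
    (T : ℕ → ℕ → ℕ)
    (hT : ∀ a b : ℕ, T a b = Set.ncard {p : (F[X] × F[X] × F[X]) × (F[X] × F[X] × F[X]) |
        p.1 ∈ Qset F a ∧ p.2 ∈ Rset F b ∧ Intersecting p.1 p.2}) :
    N + q * T (d₁ - 1) d₂ + q * T d₁ (d₂ - 1) = T d₁ d₂ + q ^ 2 * T (d₁ - 1) (d₂ - 1) := by
  classical
  have hW'fin : (Rset F d₁ ∩ {t | Primitive t}).Finite :=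
    Set.Finite.subset (Aux.rset_finite d₁) Set.inter_subset_left
  have E1 : T d₁ d₂ = (Aux.Sg F d₁ (Rset F d₂) ∩ {p | Primitive p.1}).ncard
      + Fintype.card F * T (d₁ - 1) d₂ := by
    rw [hT d₁ d₂, hT (d₁ - 1) d₂]
    exact Aux.lemmaL d₁ h1 (Rset F d₂) (Aux.rset_finite d₂)
  have E2 : T d₁ (d₂ - 1) = (Aux.Sg F d₁ (Rset F (d₂ - 1)) ∩ {p | Primitive p.1}).ncard
      + Fintype.card F * T (d₁ - 1) (d₂ - 1) := by
    rw [hT d₁ (d₂ - 1), hT (d₁ - 1) (d₂ - 1)]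
    exact Aux.lemmaL d₁ h1 (Rset F (d₂ - 1)) (Aux.rset_finite (d₂ - 1))
  have E3 : (Aux.Sg F d₂ (Rset F d₁ ∩ {t | Primitive t})).ncard
      = (Aux.Sg F d₂ (Rset F d₁ ∩ {t | Primitive t}) ∩ {p | Primitive p.1}).ncard
      + Fintype.card F * (Aux.Sg F (d₂ - 1) (Rset F d₁ ∩ {t | Primitive t})).ncard :=
    Aux.lemmaL d₂ h2 _ hW'fin
  have hA11 : (Aux.Sg F d₂ (Rset F d₁ ∩ {t | Primitive t})).ncard
      = (Aux.Sg F d₁ (Rset F d₂) ∩ {p | Primitive p.1}).ncard := by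
    rw [← Aux.claim1 d₁ d₂, Aux.ncard_sw_image]
  have hA10 : (Aux.Sg F (d₂ - 1) (Rset F d₁ ∩ {t | Primitive t})).ncard
      = (Aux.Sg F d₁ (Rset F (d₂ - 1)) ∩ {p | Primitive p.1}).ncard := by
    rw [← Aux.claim1 d₁ (d₂ - 1), Aux.ncard_sw_image]
  have hNN : Set.ncard {p : (F[X] × F[X] × F[X]) × (F[X] × F[X] × F[X]) |
        p.1 ∈ Qset F d₁ ∧ p.2 ∈ Rset F d₂ ∧ Primitive p.1 ∧ Primitive p.2 ∧
        Intersecting p.1 p.2}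
      = (Aux.Sg F d₂ (Rset F d₁ ∩ {t | Primitive t}) ∩ {p | Primitive p.1}).ncard := by
    rw [← Aux.claim2 d₁ d₂, Aux.ncard_sw_image]
  rw [hq, hN, hNN, E1, E2, ← hA11, E3, hA10]
  ring
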